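/- arXiv:2506.02732 — 5 statements merged into one kernel-verified Lean document; each statement's English description precedes it below -/
import Mathlib

section
/- For any matrix M in SL(2,F_8) with M ≠ 1, the order of M is 2 if tr(M) = 0, 3 if tr(M) = 1, 7 if tr(M) ∈ {u^3, u^5, u^6}, and 9 if tr(M) ∈ {u, u^2, u^4}. -/
abbrev F8 : Type := GaloisField 2 3
abbrev SL8 := Matrix.SpecialLinearGroup (Fin 2) F8

private abbrev M2 := Matrix (Fin 2) (Fin 2) F8

private lemma two_eq : (2:F8) = 0 := by exact_mod_cast CharP.cast_eq_zero F8 2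

private lemma sq_eq (A : M2) (h : A.det = 1) : A ^ 2 = A.trace • A + 1 := by
  rw [Matrix.det_fin_two] at h
  ext i j
  rw [pow_two]
  fin_cases i <;> fin_cases j <;>
    simp [Matrix.mul_apply, Fin.sum_univ_two, Matrix.trace_fin_two, Matrix.one_apply] <;>
    first
      | ring1
      | linear_combination -h - two_eq

private lemma step {A : M2} {t : F8} (p q : F8) {p' q' : F8} {n : ℕ}
    (h2 : A^2 = t•A+1) (hn : A^n = p•A + q•(1:M2))
    (hp : p' = p*t+q) (hq : q' = p) :
    A^(n+1) = p'•A + q'•(1:M2) := by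
  rw [pow_succ, hn, add_mul, smul_mul_assoc, smul_mul_assoc, one_mul, ← pow_two, h2, hp, hq]
  module

private lemma pow_chain {A : M2} {t : F8} (h2 : A^2 = t•A+1) :
    A^3 = (t^2+1)•A + t•(1:M2) ∧
    A^7 = (t^6+5*t^4+6*t^2+1)•A + (t^5+4*t^3+3*t)•(1:M2) ∧
    A^9 = (t^8+7*t^6+15*t^4+10*t^2+1)•A + (t^7+6*t^5+10*t^3+4*t)•(1:M2) := by
  have h2' : A^2 = t•A + (1:F8)•(1:M2) := by rw [one_smul]; exact h2
  have h3 : A^3 = (t^2+1)•A + t•(1:M2) := step t 1 h2 h2' (by ring) (by ring)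
  
  have h4 : A^4 = (t^3+2*t)•A + (t^2+1)•(1:M2) := step (p := t^2+1) (q := t) h2 h3 (by ring) (by ring)
  have h5 : A^5 = (t^4+3*t^2+1)•A + (t^3+2*t)•(1:M2) := step (p := t^3+2*t) (q := t^2+1) h2 h4 (by ring) (by ring)
  have h6 : A^6 = (t^5+4*t^3+3*t)•A + (t^4+3*t^2+1)•(1:M2) := step (p := t^4+3*t^2+1) (q := t^3+2*t) h2 h5 (by ring) (by ring)
  have h7 : A^7 = (t^6+5*t^4+6*t^2+1)•A + (t^5+4*t^3+3*t)•(1:M2) := step (p := t^5+4*t^3+3*t) (q := t^4+3*t^2+1) h2 h6 (by ring) (by ring)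
  have h8 : A^8 = (t^7+6*t^5+10*t^3+4*t)•A + (t^6+5*t^4+6*t^2+1)•(1:M2) := step (p := t^6+5*t^4+6*t^2+1) (q := t^5+4*t^3+3*t) h2 h7 (by ring) (by ring)
  have h9 : A^9 = (t^8+7*t^6+15*t^4+10*t^2+1)•A + (t^7+6*t^5+10*t^3+4*t)•(1:M2) := step (p := t^7+6*t^5+10*t^3+4*t) (q := t^6+5*t^4+6*t^2+1) h2 h8 (by ring) (by ring)

  exact ⟨h3, h7, h9⟩

private lemma pow_coe (M : SL8) (n : ℕ) (h : (M : M2)^n = 1) : M^n = 1 := by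
  ext i j
  simp [h]

private lemma coe_pow_eq (M : SL8) (n : ℕ) (h : M^n = 1) : (M : M2)^n = 1 := by
  have := congrArg (fun N : SL8 => (N : M2)) h
  simpa using this

private lemma ord7 (M : SL8) (hM : M ≠ 1) (t : F8) (htr : Matrix.trace (M : M2) = t)
    (ha : t^6+5*t^4+6*t^2+1 = 0) (hb : t^5+4*t^3+3*t = 1) : orderOf M = 7 := by
  have h2 := sq_eq (M : M2) M.2
  rw [htr] at h2
  obtain ⟨-, h7, -⟩ := pow_chain h2
  rw [ha, hb] at h7
  simp only [zero_smul, one_smul, zero_add] at h7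
  haveI : Fact (Nat.Prime 7) := ⟨by norm_num⟩
  exact orderOf_eq_prime (pow_coe M 7 h7) hM

private lemma ord9 (M : SL8) (hM : M ≠ 1) (t : F8) (htr : Matrix.trace (M : M2) = t)
    (ha : t^8+7*t^6+15*t^4+10*t^2+1 = 0) (hb : t^7+6*t^5+10*t^3+4*t = 1)
    (ht0 : t ≠ 0) (ht1 : t ≠ 1) : orderOf M = 9 := by
  have h2 := sq_eq (M : M2) M.2
  rw [htr] at h2
  obtain ⟨h3, -, h9⟩ := pow_chain h2
  rw [ha, hb] at h9
  simp only [zero_smul, one_smul, zero_add] at h9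
  have h9' : M^9 = 1 := pow_coe M 9 h9
  have h3ne : M^3 ≠ 1 := by
    intro h3'
    have hA3 : (M:M2)^3 = 1 := coe_pow_eq M 3 h3'
    rw [h3] at hA3
    have e01 : (t^2+1) * (M:M2) 0 1 = 0 := by
      have := congrArg (fun B : M2 => B 0 1) hA3
      simpa [Matrix.add_apply, Matrix.smul_apply, Matrix.one_apply, smul_eq_mul] using this
    have e00 : (t^2+1) * (M:M2) 0 0 + t = 1 := by
      have := congrArg (fun B : M2 => B 0 0) hA3
      simpa [Matrix.add_apply, Matrix.smul_apply, Matrix.one_apply, smul_eq_mul] using this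
    have e11 : (t^2+1) * (M:M2) 1 1 + t = 1 := by
      have := congrArg (fun B : M2 => B 1 1) hA3
      simpa [Matrix.add_apply, Matrix.smul_apply, Matrix.one_apply, smul_eq_mul] using this
    have htt : t^2+1 ≠ 0 := by
      intro h
      apply ht1
      have hsq : (t+1)^2 = 0 := by linear_combination h + t*two_eq
      have h1 : t + 1 = 0 := pow_eq_zero_iff (n := 2) (by norm_num) |>.mp hsq
      linear_combination h1 - two_eq
    have heq : (M:M2) 0 0 = (M:M2) 1 1 :=
      mul_left_cancel₀ htt (by linear_combination e00 - e11)
    apply ht0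
    rw [← htr, Matrix.trace_fin_two, heq]
    linear_combination (M:M2) 1 1 * two_eq
  have hdvd : orderOf M ∣ 3^2 := by
    have := orderOf_dvd_of_pow_eq_one h9'
    simpa using this
  obtain ⟨k, hk, he⟩ := (Nat.dvd_prime_pow Nat.prime_three).mp hdvd
  interval_cases k
  · exfalso; exact hM (orderOf_eq_one_iff.mp (by simpa using he))
  · exfalso
    apply h3ne
    have h3o : orderOf M = 3 := by simpa using he
    have := pow_orderOf_eq_one M
    rw [h3o] at this
    exact this
  · simpa using he

theorem stmt_0 (u : F8) (hu : u ^ 3 + u + 1 = 0)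
    (M : SL8) (hM : M ≠ 1) :
    (Matrix.trace (M : Matrix (Fin 2) (Fin 2) F8) = 0 → orderOf M = 2) ∧
    (Matrix.trace (M : Matrix (Fin 2) (Fin 2) F8) = 1 → orderOf M = 3) ∧
    (Matrix.trace (M : Matrix (Fin 2) (Fin 2) F8) ∈ ({u ^ 3, u ^ 5, u ^ 6} : Set F8) →
      orderOf M = 7) ∧
    (Matrix.trace (M : Matrix (Fin 2) (Fin 2) F8) ∈ ({u, u ^ 2, u ^ 4} : Set F8) →
      orderOf M = 9) := by
  have hu0 : u ≠ 0 := by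
    intro h
    rw [h] at hu
    simp at hu
  have hu1 : u ≠ 1 := by
    intro h
    rw [h] at hu
    exact one_ne_zero (α := F8) (by linear_combination hu - two_eq)
  have hu21 : u^2 ≠ 1 := by
    intro h
    apply hu1
    have hsq : (u+1)^2 = 0 := by linear_combination h + (u+1)*two_eq
    have h1 : u + 1 = 0 := pow_eq_zero_iff (n := 2) (by norm_num) |>.mp hsq
    linear_combination h1 - two_eq
  have hu41 : u^4 ≠ 1 := by
    intro h
    apply hu1
    have hsq : (u+1)^4 = 0 := by linear_combination h + (2*u^3+3*u^2+2*u+1)*two_eq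
    have h1 : u + 1 = 0 := pow_eq_zero_iff (n := 4) (by norm_num) |>.mp hsq
    linear_combination h1 - two_eq
  refine ⟨?_, ?_, ?_, ?_⟩
  · intro htr
    have h2 := sq_eq (M : M2) M.2
    rw [htr] at h2
    simp only [zero_smul, zero_add] at h2
    haveI : Fact (Nat.Prime 2) := ⟨by norm_num⟩
    exact orderOf_eq_prime (pow_coe M 2 h2) hM
  · intro htr
    have h2 := sq_eq (M : M2) M.2
    rw [htr] at h2
    obtain ⟨h3, -, -⟩ := pow_chain h2
    have hc : ((1:F8)^2+1) = 0 := by linear_combination two_eq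
    rw [hc, one_smul, zero_smul, zero_add] at h3
    haveI : Fact (Nat.Prime 3) := ⟨by norm_num⟩
    exact orderOf_eq_prime (pow_coe M 3 h3) hM
  · intro htr
    simp only [Set.mem_insert_iff, Set.mem_singleton_iff] at htr
    rcases htr with h | h | h
    · exact ord7 M hM _ h (by linear_combination ((1)*u^15 + (-1)*u^13 + (-1)*u^12 + (1)*u^11 + (2)*u^10 + (5)*u^9 + (-3)*u^8 + (-7)*u^7 + (-2)*u^6 + (10)*u^5 + (9)*u^4 + (-2)*u^3 + (-19)*u^2 + (-7)*u + (21)) * hu + ((13)*u^2 + (-7)*u + (-10)) * two_eq) (by linear_combination ((1)*u^12 + (-1)*u^10 + (-1)*u^9 + (1)*u^8 + (2)*u^7 + (4)*u^6 + (-3)*u^5 + (-6)*u^4 + (-1)*u^3 + (9)*u^2 + (7)*u + (-5)) * hu + ((-8)*u^2 + (-1)*u + (2)) * two_eq)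
    · exact ord7 M hM _ h (by linear_combination ((1)*u^27 + (-1)*u^25 + (-1)*u^24 + (1)*u^23 + (2)*u^22 + (-3)*u^20 + (-2)*u^19 + (3)*u^18 + (10)*u^17 + (-1)*u^16 + (-13)*u^15 + (-9)*u^14 + (14)*u^13 + (22)*u^12 + (-5)*u^11 + (-36)*u^10 + (-17)*u^9 + (41)*u^8 + (59)*u^7 + (-24)*u^6 + (-100)*u^5 + (-35)*u^4 + (124)*u^3 + (135)*u^2 + (-89)*u + (-259)) * hu + ((-23)*u^2 + (174)*u + (130)) * two_eq) (by linear_combination ((1)*u^22 + (-1)*u^20 + (-1)*u^19 + (1)*u^18 + (2)*u^17 + (-3)*u^15 + (-2)*u^14 + (3)*u^13 + (9)*u^12 + (-1)*u^11 + (-12)*u^10 + (-8)*u^9 + (13)*u^8 + (20)*u^7 + (-5)*u^6 + (-33)*u^5 + (-15)*u^4 + (38)*u^3 + (51)*u^2 + (-23)*u + (-89)) * hu + ((-14)*u^2 + (56)*u + (44)) * two_eq)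
    · exact ord7 M hM _ h (by linear_combination ((1)*u^33 + (-1)*u^31 + (-1)*u^30 + (1)*u^29 + (2)*u^28 + (-3)*u^26 + (-2)*u^25 + (3)*u^24 + (5)*u^23 + (-1)*u^22 + (-3)*u^21 + (-4)*u^20 + (4)*u^19 + (7)*u^18 + (-11)*u^16 + (-7)*u^15 + (11)*u^14 + (18)*u^13 + (-4)*u^12 + (-29)*u^11 + (-14)*u^10 + (39)*u^9 + (43)*u^8 + (-25)*u^7 + (-82)*u^6 + (-18)*u^5 + (107)*u^4 + (100)*u^3 + (-89)*u^2 + (-207)*u + (-11)) * hu + ((148)*u^2 + (109)*u + (6)) * two_eq) (by linear_combination ((1)*u^27 + (-1)*u^25 + (-1)*u^24 + (1)*u^23 + (2)*u^22 + (-3)*u^20 + (-2)*u^19 + (3)*u^18 + (5)*u^17 + (-1)*u^16 + (-4)*u^15 + (-4)*u^14 + (5)*u^13 + (8)*u^12 + (-1)*u^11 + (-13)*u^10 + (-7)*u^9 + (14)*u^8 + (20)*u^7 + (-7)*u^6 + (-34)*u^5 + (-13)*u^4 + (44)*u^3 + (47)*u^2 + (-31)*u + (-91)) * hu + ((-8)*u^2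 + (61)*u + (45)) * two_eq)
  · intro htr
    simp only [Set.mem_insert_iff, Set.mem_singleton_iff] at htr
    rcases htr with h | h | h
    · exact ord9 M hM _ h (by linear_combination ((1)*u^5 + (6)*u^3 + (-1)*u^2 + (9)*u + (-5)) * hu + ((1)*u^2 + (-2)*u + (3)) * two_eq) (by linear_combination ((1)*u^4 + (5)*u^2 + (-1)*u + (5)) * hu + ((-2)*u^2 + (-3)) * two_eq) hu0 hu1
    · exact ord9 M hM _ h (by linear_combination ((1)*u^13 + (-1)*u^11 + (-1)*u^10 + (8)*u^9 + (2)*u^8 + (-7)*u^7 + (-10)*u^6 + (20)*u^5 + (17)*u^4 + (-10)*u^3 + (-37)*u^2 + (3)*u + (47)) * hu + ((17)*u^2 + (-25)*u + (-23)) * two_eq) (by linear_combination ((1)*u^11 + (-1)*u^9 + (-1)*u^8 + (7)*u^7 + (2)*u^6 + (-6)*u^5 + (-9)*u^4 + (14)*u^3 + (15)*u^2 + (-5)*u + (-29)) * hu + ((-3)*u^2 + (17)*u + (14)) * two_eq) (pow_ne_zero 2 hu0) hu21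
    · exact ord9 M hM _ h (by linear_combination ((1)*u^29 + (-1)*u^27 + (-1)*u^26 + (1)*u^25 + (2)*u^24 + (-3)*u^22 + (5)*u^21 + (3)*u^20 + (-2)*u^19 + (-8)*u^18 + (-1)*u^17 + (10)*u^16 + (9)*u^15 + (-9)*u^14 + (-4)*u^13 + (13)*u^11 + (4)*u^10 + (-13)*u^9 + (-17)*u^8 + (9)*u^7 + (30)*u^6 + (18)*u^5 + (-39)*u^4 + (-48)*u^3 + (21)*u^2 + (87)*u + (27)) * hu + ((-54)*u^2 + (-57)*u + (-13)) * two_eq) (by linear_combination ((1)*u^25 + (-1)*u^23 + (-1)*u^22 + (1)*u^21 + (2)*u^20 + (-3)*u^18 + (4)*u^17 + (3)*u^16 + (-1)*u^15 + (-7)*u^14 + (-2)*u^13 + (8)*u^12 + (9)*u^11 + (-6)*u^10 + (-7)*u^9 + (-3)*u^8 + (13)*u^7 + (10)*u^6 + (-10)*u^5 + (-23)*u^4 + (33)*u^2 + (27)*u + (-33)) * hu + ((-30)*u^2 + (3)*u + (16)) * two_eq) (pow_ne_zero 4 hu0) hu41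
end

section
/- In ΣL(2,F_8), the Sylow 3-subgroup Δ = ⟨δ, A⟩ has center ⟨A^3⟩ of order 3, and the set of third powers of elements of Δ equals ⟨A^3⟩; moreover the subgroup ⟨δ, A^3⟩ is elementary abelian of order 9. -/
/-- The action of a field automorphism of `F8` on `SL(2,F8)`, entrywise. -/
noncomputable def slAut (σ : F8 ≃+* F8) : SL8 ≃* SL8 where
  toFun := Matrix.SpecialLinearGroup.map (σ : F8 →+* F8)
  invFun := Matrix.SpecialLinearGroup.map (σ.symm : F8 →+* F8)
  left_inv := by
    intro M
    ext i j
    first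
      | exact σ.symm_apply_apply ((M : Matrix (Fin 2) (Fin 2) F8) i j)
      | simp [Matrix.SpecialLinearGroup.map, MonoidHom.coe_mk, OneHom.coe_mk]
  right_inv := by
    intro M
    ext i j
    first
      | exact σ.apply_symm_apply ((M : Matrix (Fin 2) (Fin 2) F8) i j)
      | simp [Matrix.SpecialLinearGroup.map, MonoidHom.coe_mk, OneHom.coe_mk]
  map_mul' := map_mul _

/-- The homomorphism `Aut(F8) → Aut(SL(2,F8))`. -/
noncomputable def φ : (F8 ≃+* F8) →* MulAut SL8 where
  toFun := slAut
  map_one' := by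
    ext M i j
    rfl
  map_mul' := by
    intro σ τ
    ext M i j
    rfl

/-- `ΣL(2,8) = Aut(F8) ⋉ SL(2,F8)`. -/
abbrev SigmaL := SemidirectProduct SL8 (F8 ≃+* F8) φ


set_option maxHeartbeats 1000000 in
theorem aux {G : Type*} [Group G] (d a : G)
    (horderd : orderOf d = 3) (hordera : orderOf a = 9)
    (hconj : d * a * d⁻¹ = a ^ 4)
    (hker : ∀ i j : ℕ, d ^ i * a ^ j = 1 → 3 ∣ i ∧ 9 ∣ j)
    (Δ : Subgroup G) (hΔ : Δ = Subgroup.closure {d, a}) :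
    (Subgroup.center Δ).map Δ.subtype = Subgroup.closure {a ^ 3} ∧
    Nat.card (Subgroup.closure {a ^ 3} : Subgroup G) = 3 ∧
    (fun g : G => g ^ 3) '' (Δ : Set G)
      = ((Subgroup.closure {a ^ 3} : Subgroup G) : Set G) ∧
    Nat.card (Subgroup.closure {d, a ^ 3} : Subgroup G) = 9 ∧
    (∀ x ∈ Subgroup.closure {d, a ^ 3}, x ^ 3 = (1 : G)) ∧
    (∀ x ∈ Subgroup.closure {d, a ^ 3}, ∀ y ∈ Subgroup.closure {d, a ^ 3}, x * y = y * x) := by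
  have hd3 : d ^ 3 = 1 := by rw [← horderd]; exact pow_orderOf_eq_one d
  have ha9 : a ^ 9 = 1 := by rw [← hordera]; exact pow_orderOf_eq_one a
  have hamod : ∀ n : ℕ, a ^ n = a ^ (n % 9) := by
    intro n; rw [← hordera]; exact (pow_mod_orderOf a n).symm
  have hdmod : ∀ n : ℕ, d ^ n = d ^ (n % 3) := by
    intro n; rw [← horderd]; exact (pow_mod_orderOf d n).symm
  have hconjpow : ∀ n : ℕ, d * a ^ n * d⁻¹ = a ^ (4 * n) := by
    intro n
    rw [pow_mul a 4 n, ← hconj, conj_pow]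
  have hswap1 : ∀ j : ℕ, a ^ j * d = d * a ^ (7 * j) := by
    intro j
    have h := hconjpow (7 * j)
    have h28 : a ^ (4 * (7 * j)) = a ^ j := by
      rw [hamod (4 * (7 * j)), hamod j]
      congr 1
      omega
    rw [h28] at h
    rw [← h]
    group
  have hswap : ∀ j k : ℕ, a ^ j * d ^ k = d ^ k * a ^ (7 ^ k * j) := by
    intro j k
    induction k with
    | zero => simp
    | succ k ih =>
      rw [pow_succ, ← mul_assoc, ih, mul_assoc, hswap1, ← mul_assoc, ← pow_succ]
      congr 2
      ring
  have hprod : ∀ i j k l : ℕ,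
      (d ^ i * a ^ j) * (d ^ k * a ^ l) = d ^ (i + k) * a ^ (7 ^ k * j + l) := by
    intro i j k l
    calc (d ^ i * a ^ j) * (d ^ k * a ^ l) = d ^ i * (a ^ j * d ^ k) * a ^ l := by group
    _ = d ^ i * (d ^ k * a ^ (7 ^ k * j)) * a ^ l := by rw [hswap]
    _ = (d ^ i * d ^ k) * (a ^ (7 ^ k * j) * a ^ l) := by group
    _ = d ^ (i + k) * a ^ (7 ^ k * j + l) := by rw [← pow_add, ← pow_add]
  have hd3i : ∀ i : ℕ, d ^ (3 * i) = 1 := by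
    intro i; rw [pow_mul, hd3, one_pow]
  have hdΔ : d ∈ Δ := by rw [hΔ]; exact Subgroup.subset_closure (by simp)
  have haΔ : a ∈ Δ := by rw [hΔ]; exact Subgroup.subset_closure (by simp)
  have hmemΔ : ∀ x ∈ Δ, ∃ i < 3, ∃ j < 9, x = d ^ i * a ^ j := by
    rw [hΔ]
    intro x hx
    induction hx using Subgroup.closure_induction with
    | mem x hx =>
      rcases hx with h | h
      · exact ⟨1, by norm_num, 0, by norm_num, by simp [h]⟩
      · exact ⟨0, by norm_num, 1, by norm_num, by simp [Set.mem_singleton_iff.1 h]⟩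
    | one => exact ⟨0, by norm_num, 0, by norm_num, by simp⟩
    | mul x y hx hy px py =>
      obtain ⟨i, hi, j, hj, rfl⟩ := px
      obtain ⟨k, hk, l, hl, rfl⟩ := py
      refine ⟨(i + k) % 3, Nat.mod_lt _ (by norm_num), (7 ^ k * j + l) % 9,
        Nat.mod_lt _ (by norm_num), ?_⟩
      rw [hprod, hdmod (i + k), hamod (7 ^ k * j + l)]
    | inv x hx px =>
      obtain ⟨i, hi, j, hj, rfl⟩ := px
      refine ⟨(2 * i) % 3, Nat.mod_lt _ (by norm_num), (8 * (7 ^ (2 * i) * j)) % 9,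
        Nat.mod_lt _ (by norm_num), ?_⟩
      rw [← hdmod, ← hamod]
      symm
      rw [eq_inv_iff_mul_eq_one, hprod, show 2 * i + i = 3 * i from by ring, hd3i, one_mul]
      have h343 : 7 ^ (3 * i) % 9 = 1 := by
        rw [pow_mul, Nat.pow_mod]
        norm_num
      obtain ⟨s, hs⟩ : ∃ s, 7 ^ (3 * i) = 9 * s + 1 := ⟨7 ^ (3 * i) / 9, by omega⟩
      have hE2 : (7 ^ i * (8 * (7 ^ (2 * i) * j)) + j) = 9 * (8 * s * j + j) := by
        rw [show 7 ^ i * (8 * (7 ^ (2 * i) * j)) = 8 * 7 ^ (3 * i) * j from by ring, hs]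
        ring
      rw [hE2, pow_mul, ha9, one_pow]
  -- order of a^3
  have hb3 : (a ^ 3) ^ 3 = 1 := by rw [← pow_mul]; exact ha9
  have hbne : a ^ 3 ≠ 1 := by
    intro h
    have h2 := hker 0 3 (by simpa using h)
    omega
  have horderb : orderOf (a ^ 3) = 3 := orderOf_eq_prime hb3 hbne
  have hbmod : ∀ n : ℕ, (a ^ 3) ^ n = (a ^ 3) ^ (n % 3) := by
    intro n
    have h := (pow_mod_orderOf (a ^ 3) n).symm
    rwa [horderb] at h
  have ha3Δ : a ^ 3 ∈ Δ := pow_mem haΔ 3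
  have hpoweq : ∀ m n : ℕ, m % 9 = n % 9 → a ^ m = a ^ n := by
    intro m n h; rw [hamod m, hamod n, h]
  have hpoweq' : ∀ m n : ℕ, a ^ m = a ^ n → m % 9 = n % 9 := by
    intro m n h
    have := pow_eq_pow_iff_modEq.1 h
    rw [hordera] at this
    exact this
  -- claim 1
  have hcentral : ∀ y ∈ Δ, a ^ 3 * y = y * a ^ 3 := by
    intro y hy
    obtain ⟨k, hk, l, hl, rfl⟩ := hmemΔ y hy
    have h1 : a ^ 3 * (d ^ k * a ^ l) = d ^ k * a ^ (7 ^ k * 3 + l) := by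
      have := hprod 0 3 k l
      simpa using this
    have h2 : (d ^ k * a ^ l) * a ^ 3 = d ^ k * a ^ (l + 3) := by
      rw [mul_assoc, ← pow_add]
    rw [h1, h2]
    congr 1
    apply hpoweq
    have h73 : 7 ^ k % 3 = 1 := by rw [Nat.pow_mod]; norm_num
    omega
  have claim1 : (Subgroup.center Δ).map Δ.subtype = Subgroup.closure {a ^ 3} := by
    apply le_antisymm
    · intro x hx
      obtain ⟨z, hz, rfl⟩ := Subgroup.mem_map.1 hx
      obtain ⟨i, hi, j, hj, hform⟩ := hmemΔ z.1 z.2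
      have hcomm := Subgroup.mem_center_iff.1 hz
      have hca : a * z.1 = z.1 * a := congrArg Subtype.val (hcomm ⟨a, haΔ⟩)
      have hcd : d * z.1 = z.1 * d := congrArg Subtype.val (hcomm ⟨d, hdΔ⟩)
      rw [hform] at hca hcd
      -- from hca derive i = 0
      have e1 : a ^ (7 ^ i * 1 + j) = a ^ (j + 1) := by
        have h := hprod 0 1 i j
        simp only [pow_zero, one_mul, pow_one, zero_add] at h
        rw [hca, mul_assoc, ← pow_succ] at h
        exact (mul_left_cancel h).symm
      have e1' := hpoweq' _ _ e1
      have hi0 : i = 0 := by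
        interval_cases i
        · rfl
        · norm_num at e1'; omega
        · norm_num at e1'; omega
      subst hi0
      simp only [pow_zero, one_mul] at hform hcd
      -- from hcd derive 3 ∣ j
      have e2 : a ^ (7 * j) = a ^ j := by
        have h := hswap j 1
        simp only [pow_one] at h
        have h' : d * a ^ (7 * j) = d * a ^ j := by rw [← h, ← hcd]
        exact mul_left_cancel h'
      have e2' := hpoweq' _ _ e2
      have h3j : 3 ∣ j := by omega
      obtain ⟨t, ht⟩ := h3j
      rw [Subgroup.coe_subtype, hform, ht, pow_mul]
      exact pow_mem (Subgroup.subset_closure (Set.mem_singleton (a ^ 3))) t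
    · rw [Subgroup.closure_le]
      intro x hx
      rw [Set.mem_singleton_iff] at hx
      subst hx
      exact Subgroup.mem_map.2 ⟨⟨a ^ 3, ha3Δ⟩,
        Subgroup.mem_center_iff.2 (fun g => Subtype.ext (hcentral g.1 g.2).symm), rfl⟩
  -- claim 2
  have claim2 : Nat.card (Subgroup.closure {a ^ 3} : Subgroup G) = 3 := by
    rw [← Subgroup.zpowers_eq_closure, Nat.card_zpowers, horderb]
  -- claim 3
  have hcube : ∀ i j : ℕ, (d ^ i * a ^ j) ^ 3 = a ^ ((7 ^ (2 * i) + 7 ^ i + 1) * j) := by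
    intro i j
    calc (d ^ i * a ^ j) ^ 3 = (d ^ i * a ^ j) * (d ^ i * a ^ j) * (d ^ i * a ^ j) := by
          rw [pow_succ, pow_succ, pow_one]
    _ = (d ^ (i + i) * a ^ (7 ^ i * j + j)) * (d ^ i * a ^ j) := by rw [hprod]
    _ = d ^ (i + i + i) * a ^ (7 ^ i * (7 ^ i * j + j) + j) := hprod _ _ _ _
    _ = a ^ ((7 ^ (2 * i) + 7 ^ i + 1) * j) := by
        rw [show i + i + i = 3 * i from by ring, hd3i, one_mul]
        congr 1
        ring
  have claim3 : (fun g : G => g ^ 3) '' (Δ : Set G)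
      = ((Subgroup.closure {a ^ 3} : Subgroup G) : Set G) := by
    ext x
    simp only [Set.mem_image, SetLike.mem_coe]
    constructor
    · rintro ⟨g, hg, rfl⟩
      obtain ⟨i, hi, j, hj, rfl⟩ := hmemΔ g hg
      rw [hcube]
      have h1 : 7 ^ (2 * i) % 3 = 1 := by rw [Nat.pow_mod]; norm_num
      have h2 : 7 ^ i % 3 = 1 := by rw [Nat.pow_mod]; norm_num
      have h3d : 3 ∣ (7 ^ (2 * i) + 7 ^ i + 1) := by omega
      obtain ⟨t, ht⟩ := h3d
      rw [ht, show 3 * t * j = 3 * (t * j) from by ring, pow_mul]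
      exact pow_mem (Subgroup.subset_closure (Set.mem_singleton (a ^ 3))) _
    · intro hx
      rw [← Subgroup.zpowers_eq_closure] at hx
      obtain ⟨n, hn⟩ := Subgroup.mem_zpowers_iff.1 hx
      refine ⟨a ^ (n % 3).toNat, pow_mem haΔ _, ?_⟩
      show (a ^ (n % 3).toNat) ^ 3 = x
      rw [← pow_mul, mul_comm, pow_mul]
      rw [← hn, ← zpow_natCast, Int.toNat_of_nonneg (Int.emod_nonneg n (by norm_num))]
      have := zpow_mod_orderOf (a ^ 3) n
      rw [horderb] at this
      exact_mod_cast this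
  -- E = closure {d, a^3}
  have hdb : Commute d (a ^ 3) := by
    have h := hswap 3 1
    simp only [pow_one] at h
    have h21 : a ^ (7 * 3) = a ^ 3 := by apply hpoweq; norm_num
    rw [h21] at h
    exact h.symm
  have hprodE : ∀ i j k l : ℕ,
      (d ^ i * (a ^ 3) ^ j) * (d ^ k * (a ^ 3) ^ l) = d ^ (i + k) * (a ^ 3) ^ (j + l) := by
    intro i j k l
    have hc2 : (a ^ 3) ^ j * d ^ k = d ^ k * (a ^ 3) ^ j := (hdb.symm.pow_pow j k).eq
    calc (d ^ i * (a ^ 3) ^ j) * (d ^ k * (a ^ 3) ^ l)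
        = d ^ i * ((a ^ 3) ^ j * d ^ k) * (a ^ 3) ^ l := by group
    _ = d ^ i * (d ^ k * (a ^ 3) ^ j) * (a ^ 3) ^ l := by rw [hc2]
    _ = (d ^ i * d ^ k) * ((a ^ 3) ^ j * (a ^ 3) ^ l) := by group
    _ = d ^ (i + k) * (a ^ 3) ^ (j + l) := by rw [← pow_add, ← pow_add]
  have hb3i : ∀ i : ℕ, (a ^ 3) ^ (3 * i) = 1 := by
    intro i; rw [pow_mul, hb3, one_pow]
  have hdE : d ∈ Subgroup.closure ({d, a ^ 3} : Set G) := Subgroup.subset_closure (by simp)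
  have hbE : a ^ 3 ∈ Subgroup.closure ({d, a ^ 3} : Set G) := Subgroup.subset_closure (by simp)
  have hmemE : ∀ x ∈ Subgroup.closure ({d, a ^ 3} : Set G),
      ∃ i < 3, ∃ j < 3, x = d ^ i * (a ^ 3) ^ j := by
    intro x hx
    induction hx using Subgroup.closure_induction with
    | mem x hx =>
      rcases hx with h | h
      · exact ⟨1, by norm_num, 0, by norm_num, by simp [h]⟩
      · exact ⟨0, by norm_num, 1, by norm_num, by simp [Set.mem_singleton_iff.1 h]⟩
    | one => exact ⟨0, by norm_num, 0, by norm_num, by simp⟩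
    | mul x y hx hy px py =>
      obtain ⟨i, hi, j, hj, rfl⟩ := px
      obtain ⟨k, hk, l, hl, rfl⟩ := py
      refine ⟨(i + k) % 3, Nat.mod_lt _ (by norm_num), (j + l) % 3,
        Nat.mod_lt _ (by norm_num), ?_⟩
      rw [hprodE, hdmod (i + k), hbmod (j + l)]
    | inv x hx px =>
      obtain ⟨i, hi, j, hj, rfl⟩ := px
      refine ⟨(2 * i) % 3, Nat.mod_lt _ (by norm_num), (2 * j) % 3,
        Nat.mod_lt _ (by norm_num), ?_⟩
      rw [← hdmod, ← hbmod]
      symm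
      rw [eq_inv_iff_mul_eq_one, hprodE, show 2 * i + i = 3 * i from by ring,
        show 2 * j + j = 3 * j from by ring, hd3i, hb3i, one_mul]
  have hfreeE : ∀ i j k l : ℕ, i < 3 → j < 3 → k < 3 → l < 3 →
      d ^ i * (a ^ 3) ^ j = d ^ k * (a ^ 3) ^ l → i = k ∧ j = l := by
    intro i j k l hi hj hk hl h
    have h2 : (d ^ i * (a ^ 3) ^ j) * (d ^ (2 * k) * (a ^ 3) ^ (2 * l)) = 1 := by
      rw [h, hprodE, show k + 2 * k = 3 * k from by ring, show l + 2 * l = 3 * l from by ring,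
        hd3i, hb3i, one_mul]
    rw [hprodE, ← pow_mul] at h2
    have h3 := hker _ _ h2
    omega
  have claim4 : Nat.card (Subgroup.closure {d, a ^ 3} : Subgroup G) = 9 := by
    have hme : ∀ p : Fin 3 × Fin 3,
        d ^ (p.1 : ℕ) * (a ^ 3) ^ (p.2 : ℕ) ∈ Subgroup.closure ({d, a ^ 3} : Set G) :=
      fun p => mul_mem (pow_mem hdE _) (pow_mem hbE _)
    have hbij : Function.Bijective
        (fun p : Fin 3 × Fin 3 =>
          (⟨d ^ (p.1 : ℕ) * (a ^ 3) ^ (p.2 : ℕ), hme p⟩ :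
            ↥(Subgroup.closure ({d, a ^ 3} : Set G)))) := by
      constructor
      · rintro ⟨⟨i, hi⟩, ⟨j, hj⟩⟩ ⟨⟨k, hk⟩, ⟨l, hl⟩⟩ h
        have h' := congrArg Subtype.val h
        obtain ⟨h1, h2⟩ := hfreeE i j k l hi hj hk hl h'
        simp [Prod.ext_iff, Fin.ext_iff, h1, h2]
      · rintro ⟨x, hx⟩
        obtain ⟨i, hi, j, hj, rfl⟩ := hmemE x hx
        exact ⟨(⟨i, hi⟩, ⟨j, hj⟩), rfl⟩
    have h : Nat.card (Fin 3 × Fin 3)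
        = Nat.card ↥(Subgroup.closure ({d, a ^ 3} : Set G)) :=
      Nat.card_eq_of_bijective _ hbij
    rw [← h]
    rw [Nat.card_eq_fintype_card]
    norm_num
  have claim5 : ∀ x ∈ Subgroup.closure ({d, a ^ 3} : Set G), x ^ 3 = (1 : G) := by
    intro x hx
    obtain ⟨i, hi, j, hj, rfl⟩ := hmemE x hx
    rw [pow_succ, pow_succ, pow_one, hprodE, hprodE,
      show i + i + i = 3 * i from by ring, show j + j + j = 3 * j from by ring, hd3i, hb3i,
      one_mul]
  have claim6 : ∀ x ∈ Subgroup.closure ({d, a ^ 3} : Set G),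
      ∀ y ∈ Subgroup.closure ({d, a ^ 3} : Set G), x * y = y * x := by
    intro x hx y hy
    obtain ⟨i, hi, j, hj, rfl⟩ := hmemE x hx
    obtain ⟨k, hk, l, hl, rfl⟩ := hmemE y hy
    rw [hprodE, hprodE, Nat.add_comm k i, Nat.add_comm l j]
  exact ⟨claim1, claim2, claim3, claim4, claim5, claim6⟩

theorem stmt_9 (u : F8) (hu : u ^ 3 = u + 1) (hu7 : orderOf u = 7)
    (δf : F8 ≃+* F8) (hδ : ∀ x : F8, δf x = x ^ 4)
    (A : SL8) (hA : (A : Matrix (Fin 2) (Fin 2) F8) = !![u ^ 2, u; u, u ^ 4])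
    (d a : SigmaL) (hd : d = SemidirectProduct.inr δf) (ha : a = SemidirectProduct.inl A)
    (Δ : Subgroup SigmaL) (hΔ : Δ = Subgroup.closure {d, a}) :
    (Subgroup.center Δ).map Δ.subtype = Subgroup.closure {a ^ 3} ∧
    Nat.card (Subgroup.closure {a ^ 3} : Subgroup SigmaL) = 3 ∧
    (fun g : SigmaL => g ^ 3) '' (Δ : Set SigmaL)
      = ((Subgroup.closure {a ^ 3} : Subgroup SigmaL) : Set SigmaL) ∧
    Nat.card (Subgroup.closure {d, a ^ 3} : Subgroup SigmaL) = 9 ∧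
    (∀ x ∈ Subgroup.closure {d, a ^ 3}, x ^ 3 = (1 : SigmaL)) ∧
    (∀ x ∈ Subgroup.closure {d, a ^ 3}, ∀ y ∈ Subgroup.closure {d, a ^ 3}, x * y = y * x) := by

  -- basic field facts
  have b2 : (2 : F8) = 0 := by
    have := CharP.cast_eq_zero F8 2
    exact_mod_cast this
  have p7 : u ^ 7 = 1 := by rw [← hu7]; exact pow_orderOf_eq_one u
  have p4 : u ^ 4 = u ^ 2 + u := by linear_combination u * hu
  have p5 : u ^ 5 = u ^ 2 + u + 1 := by linear_combination (u^2+1) * hu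
  have p6 : u ^ 6 = u ^ 2 + 1 := by linear_combination (u^3+u+1) * hu + u * b2
  have p8 : u ^ 8 = u := by rw [show (8:ℕ) = 7+1 from rfl, pow_succ, p7, one_mul]
  have p16 : u ^ 16 = u ^ 2 := by rw [show (16:ℕ) = 8*2 from rfl, pow_mul, p8]
  -- matrix powers of A
  have hA2 : ((A^2 : SL8) : Matrix (Fin 2) (Fin 2) F8) = !![u, u^2; u^2, u^2+u] := by
    rw [pow_two, Matrix.SpecialLinearGroup.coe_mul, hA]
    ext i j
    fin_cases i <;> fin_cases j <;>
      simp [Matrix.mul_apply, Fin.sum_univ_two] <;>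
      first
        | linear_combination u*hu + u^2*b2
        | linear_combination hu + p5 + (u+1)*b2
        | linear_combination p8
  have hA3 : ((A^3 : SL8) : Matrix (Fin 2) (Fin 2) F8) = !![0, 1; 1, 1] := by
    rw [pow_succ, Matrix.SpecialLinearGroup.coe_mul, hA2, hA]
    ext i j
    fin_cases i <;> fin_cases j <;>
      simp [Matrix.mul_apply, Fin.sum_univ_two] <;>
      first
        | linear_combination u^3 * b2
        | linear_combination p6 + u^2*b2
        | linear_combination p4 + hu + (u^2+u)*b2
        | linear_combination p6 + p5 + hu + (u^2+u+1)*b2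
  have hA9 : A ^ 9 = 1 := by
    have h : ((A^9 : SL8) : Matrix (Fin 2) (Fin 2) F8) = 1 := by
      rw [show (9:ℕ) = 3*3 from rfl, pow_mul, Matrix.SpecialLinearGroup.coe_pow, hA3]
      ext i j
      fin_cases i <;> fin_cases j <;>
        simp [pow_succ, Matrix.mul_apply, Fin.sum_univ_two, Matrix.one_apply] <;>
        try linear_combination b2
    ext i j
    rw [h]
    simp
  have hA3ne : A ^ 3 ≠ 1 := by
    intro h
    have h0 : ((A^3 : SL8) : Matrix (Fin 2) (Fin 2) F8) 0 0 = 1 := by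
      rw [h]; simp
    rw [hA3] at h0
    simp at h0
  -- conjugation action
  have hφA : φ δf A = A ^ 4 := by
    have h4 : ((A^4 : SL8) : Matrix (Fin 2) (Fin 2) F8) = !![u, u^4; u^2+u, u+u^4] := by
      rw [show (4:ℕ) = 3+1 from rfl, pow_succ, Matrix.SpecialLinearGroup.coe_mul, hA3, hA]
      ext i j
      fin_cases i <;> fin_cases j <;>
        simp [Matrix.mul_apply, Fin.sum_univ_two]
    ext i j
    rw [h4]
    show ((A : Matrix (Fin 2) (Fin 2) F8).map δf) i j = _
    rw [hA]
    fin_cases i <;> fin_cases j <;>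
      simp [hδ] <;>
      first
        | linear_combination p8
        | linear_combination p4
        | linear_combination p16 - p4 - u * b2
  -- the field automorphism has order 3
  have hpow8 : ∀ x : F8, x ^ 8 = x := by
    have : Fintype F8 := Fintype.ofFinite F8
    have hcard : Fintype.card F8 = 8 := by
      rw [← Nat.card_eq_fintype_card, GaloisField.card 2 3 (by norm_num)]; norm_num
    intro x
    rw [← hcard]; exact FiniteField.pow_card x
  have hδ3 : δf ^ 3 = 1 := by
    ext x
    have h : (δf ^ 3) x = δf (δf (δf x)) := rfl
    rw [h, hδ, hδ, hδ]
    show ((x ^ 4) ^ 4) ^ 4 = x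
    rw [← pow_mul, ← pow_mul]
    rw [show (4*4*4 : ℕ) = 8*8 from rfl, pow_mul, hpow8, hpow8]
  have hδne : δf ≠ 1 := by
    intro h
    have hu0 : u ≠ 0 := by
      intro h0
      have h7 := pow_orderOf_eq_one u
      rw [hu7, h0] at h7
      simp at h7
    have h1 : u ^ 4 = u := by
      have := hδ u
      rw [h] at this
      simpa using this.symm
    have h3 : u ^ 3 = 1 := mul_left_cancel₀ hu0 (by linear_combination h1)
    have := orderOf_dvd_of_pow_eq_one h3
    rw [hu7] at this
    norm_num at this
  have horderδ : orderOf δf = 3 := orderOf_eq_prime hδ3 hδne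
  have horderA : orderOf A = 9 := by
    have := Fact.mk (Nat.prime_three)
    have h := orderOf_eq_prime_pow (x := A) (p := 3) (n := 1) (by simpa using hA3ne)
      (by norm_num; exact hA9)
    norm_num at h; exact h
  -- transfer to the semidirect product
  have horderd : orderOf d = 3 := by
    rw [hd, orderOf_injective SemidirectProduct.inr SemidirectProduct.inr_injective δf, horderδ]
  have hordera : orderOf a = 9 := by
    rw [ha, orderOf_injective SemidirectProduct.inl SemidirectProduct.inl_injective A, horderA]
  have hconj : d * a * d⁻¹ = a ^ 4 := by
    rw [hd, ha, ← map_inv, ← SemidirectProduct.inl_aut, hφA, map_pow]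
  have hker : ∀ i j : ℕ, d ^ i * a ^ j = 1 → 3 ∣ i ∧ 9 ∣ j := by
    intro i j h
    have h1 : δf ^ i = 1 := by
      have := congrArg SemidirectProduct.rightHom h
      simpa [hd, ha, map_mul, map_pow, SemidirectProduct.right_inl,
        SemidirectProduct.right_inr] using this
    constructor
    · rw [← horderδ]; exact orderOf_dvd_of_pow_eq_one h1
    · have hdi : d ^ i = 1 := by rw [hd, ← map_pow, h1, map_one]
      rw [hdi, one_mul, ha, ← map_pow] at h
      have h2 : A ^ j = 1 :=
        SemidirectProduct.inl_injective (h.trans (map_one SemidirectProduct.inl).symm)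
      rw [← horderA]; exact orderOf_dvd_of_pow_eq_one h2
  exact aux d a horderd hordera hconj hker Δ hΔ
end

section
/- The center of the Ree root group Ξ_θ(K) is exactly Z = {(0,0,c) : c ∈ K}; in particular Ξ_θ(K) is nilpotent of class at most 3, and if |K| = 3 then the commutator subgroup of Ξ equals Z and Ξ is nilpotent of class 2. -/
/-- Element of the Ree root group `Ξ_θ(K)`: a triple `(a,b,c)` of elements of `K`. -/
@[ext]
structure ReeGp (K : Type*) [Field K] (θ : K →+* K) where
  a : K
  b : K
  c : K

namespace ReeGp

variable {K : Type*} [Field K] {θ : K →+* K}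

instance : Mul (ReeGp K θ) :=
  ⟨fun α ξ => ⟨α.a + ξ.a, α.b + ξ.b + α.a * θ ξ.a,
    α.c + ξ.c + α.a * ξ.b - α.b * ξ.a - α.a * ξ.a * θ ξ.a⟩⟩

instance : One (ReeGp K θ) := ⟨⟨0, 0, 0⟩⟩

instance : Inv (ReeGp K θ) := ⟨fun α => ⟨-α.a, θ α.a * α.a - α.b, -α.c⟩⟩

@[simp] lemma mul_a (α ξ : ReeGp K θ) : (α * ξ).a = α.a + ξ.a := rfl
@[simp] lemma mul_b (α ξ : ReeGp K θ) : (α * ξ).b = α.b + ξ.b + α.a * θ ξ.a := rfl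
@[simp] lemma mul_c (α ξ : ReeGp K θ) :
    (α * ξ).c = α.c + ξ.c + α.a * ξ.b - α.b * ξ.a - α.a * ξ.a * θ ξ.a := rfl
@[simp] lemma one_a : (1 : ReeGp K θ).a = 0 := rfl
@[simp] lemma one_b : (1 : ReeGp K θ).b = 0 := rfl
@[simp] lemma one_c : (1 : ReeGp K θ).c = 0 := rfl
@[simp] lemma inv_a (α : ReeGp K θ) : (α⁻¹).a = -α.a := rfl
@[simp] lemma inv_b (α : ReeGp K θ) : (α⁻¹).b = θ α.a * α.a - α.b := rfl
@[simp] lemma inv_c (α : ReeGp K θ) : (α⁻¹).c = -α.c := rfl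

instance : Group (ReeGp K θ) where
  mul_assoc α ξ ψ := by
    ext <;> simp [map_add] <;> ring
  one_mul α := by ext <;> simp
  mul_one α := by ext <;> simp
  inv_mul_cancel α := by ext <;> simp [map_neg] <;> ring

end ReeGp

namespace ReeGp
variable {K : Type*} [Field K] {θ : K →+* K}
open scoped commutatorElement

@[simp] lemma comm_a (g h : ReeGp K θ) : (⁅g, h⁆).a = 0 := by
  simp [commutatorElement_def]

lemma comm_b (g h : ReeGp K θ) : (⁅g, h⁆).b = g.a * θ h.a - h.a * θ g.a := by
  simp [commutatorElement_def, map_add, map_neg]; ring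

lemma two_ne_zero' [CharP K 3] : (2 : K) ≠ 0 := by
  intro hc
  have h3 : (3 : K) = 0 := CharP.cast_eq_zero K 3
  have : (1 : K) = 0 := by linear_combination h3 - hc
  simp at this

lemma mem_center_iff [CharP K 3] (z : ReeGp K θ) :
    z ∈ Subgroup.center (ReeGp K θ) ↔ z.a = 0 ∧ z.b = 0 := by
  rw [Subgroup.mem_center_iff]
  constructor
  · intro h
    have h1 := congrArg ReeGp.c (h ⟨0, 1, 0⟩)
    have h2 := congrArg ReeGp.c (h ⟨1, 0, 0⟩)
    simp [map_one] at h1 h2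
    have ha : z.a = 0 := by
      have h2a : (2 : K) * z.a = 0 := by linear_combination -h1
      rcases mul_eq_zero.1 h2a with h | h
      · exact absurd h two_ne_zero'
      · exact h
    refine ⟨ha, ?_⟩
    rw [ha] at h2
    have h2b : (2 : K) * z.b = 0 := by linear_combination h2
    rcases mul_eq_zero.1 h2b with h | h
    · exact absurd h two_ne_zero'
    · exact h
  · rintro ⟨ha, hb⟩ g
    ext <;> simp [ha, hb] <;> ring

lemma comm_center [CharP K 3] (g h : ReeGp K θ) (hg : g.a = 0) :
    ⁅g, h⁆ ∈ Subgroup.center (ReeGp K θ) := by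
  rw [mem_center_iff]
  exact ⟨comm_a g h, by rw [comm_b, hg]; simp⟩

/-- The subgroup of elements with `a = 0`. -/
def A (K : Type*) [Field K] (θ : K →+* K) : Subgroup (ReeGp K θ) where
  carrier := {z | z.a = 0}
  mul_mem' := by intro x y hx hy; simp_all [Set.mem_setOf_eq]
  one_mem' := rfl
  inv_mem' := by intro x hx; simp_all [Set.mem_setOf_eq]

lemma lcs1_le_A [CharP K 3] : Subgroup.lowerCentralSeries (⊤ : Subgroup (ReeGp K θ)) 1 ≤ A K θ := by
  rw [Subgroup.top_lowerCentralSeries_one, commutator_def, Subgroup.commutator_le]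
  intro g _ h _
  exact comm_a g h

lemma lcs2_le_center [CharP K 3] :
    Subgroup.lowerCentralSeries (⊤ : Subgroup (ReeGp K θ)) 2 ≤ Subgroup.center (ReeGp K θ) := by
  show ⁅Subgroup.lowerCentralSeries (⊤ : Subgroup (ReeGp K θ)) 1, ⊤⁆ ≤ _
  rw [Subgroup.commutator_le]
  intro g hg h _
  exact comm_center g h (lcs1_le_A hg)

lemma lcs_succ_bot [CharP K 3] (n : ℕ)
    (h : Subgroup.lowerCentralSeries (⊤ : Subgroup (ReeGp K θ)) n ≤ Subgroup.center (ReeGp K θ)) :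
    Subgroup.lowerCentralSeries (⊤ : Subgroup (ReeGp K θ)) (n + 1) = ⊥ := by
  rw [eq_bot_iff]
  show ⁅Subgroup.lowerCentralSeries (⊤ : Subgroup (ReeGp K θ)) n, ⊤⁆ ≤ ⊥
  rw [Subgroup.commutator_le]
  intro g hg k _
  rw [Subgroup.mem_bot, commutatorElement_eq_one_iff_mul_comm]
  exact ((Subgroup.mem_center_iff.1 (h hg)) k).symm
lemma tri [CharP K 3] (h3 : Nat.card K = 3) (x : K) : x = 0 ∨ x = 1 ∨ x = -1 := by
  have : Finite K := Nat.finite_of_card_ne_zero (by omega)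
  have : Fintype K := Fintype.ofFinite K
  have hc : Fintype.card K = 3 := by rw [← Nat.card_eq_fintype_card]; exact h3
  have hx : x ^ 3 = x := by rw [← hc]; exact FiniteField.pow_card x
  have : x * ((x - 1) * (x + 1)) = 0 := by linear_combination hx
  rcases mul_eq_zero.1 this with h | h
  · exact Or.inl h
  · rcases mul_eq_zero.1 h with h | h
    · exact Or.inr (Or.inl (by linear_combination h))
    · exact Or.inr (Or.inr (by linear_combination h))

lemma theta_fix [CharP K 3] (h3 : Nat.card K = 3) (x : K) : θ x = x := by
  rcases tri h3 x with h | h | h <;> subst h <;> simp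

lemma key_comm [CharP K 3] :
    ⁅(⟨1, 0, 0⟩ : ReeGp K θ), (⟨0, 1, 0⟩ : ReeGp K θ)⁆ = ⟨0, 0, -1⟩ := by
  have h3 : (3 : K) = 0 := CharP.cast_eq_zero K 3
  ext <;> simp [commutatorElement_def, map_one] <;> linear_combination h3

end ReeGp


theorem stmt_16 {K : Type*} [Field K] [CharP K 3] (θ : K →+* K)
    (hθ : ∀ x : K, θ (θ x) = x ^ 3) :
    (∀ z : ReeGp K θ, z ∈ Subgroup.center (ReeGp K θ) ↔ z.a = 0 ∧ z.b = 0) ∧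
    Group.IsNilpotent (ReeGp K θ) ∧
    Subgroup.lowerCentralSeries (⊤ : Subgroup (ReeGp K θ)) 3 = ⊥ ∧
    (Nat.card K = 3 →
      commutator (ReeGp K θ) = Subgroup.center (ReeGp K θ) ∧
      Subgroup.lowerCentralSeries (⊤ : Subgroup (ReeGp K θ)) 2 = ⊥ ∧
      Subgroup.lowerCentralSeries (⊤ : Subgroup (ReeGp K θ)) 1 ≠ ⊥) := by
  have hlcs3 : Subgroup.lowerCentralSeries (⊤ : Subgroup (ReeGp K θ)) 3 = ⊥ :=
    ReeGp.lcs_succ_bot 2 ReeGp.lcs2_le_center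
  refine ⟨ReeGp.mem_center_iff, Subgroup.nilpotent_iff_lowerCentralSeries.mpr ⟨3, hlcs3⟩, hlcs3, ?_⟩
  intro h3
  have hkey : (⟨0, 0, -1⟩ : ReeGp K θ) ∈ commutator (ReeGp K θ) := by
    rw [← ReeGp.key_comm, commutator_def]
    exact Subgroup.commutator_mem_commutator (Subgroup.mem_top _) (Subgroup.mem_top _)
  have hcs : commutator (ReeGp K θ) = Subgroup.center (ReeGp K θ) := by
    apply le_antisymm
    · rw [commutator_def, Subgroup.commutator_le]
      intro g _ k _
      rw [ReeGp.mem_center_iff]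
      refine ⟨ReeGp.comm_a g k, ?_⟩
      rw [ReeGp.comm_b, ReeGp.theta_fix h3, ReeGp.theta_fix h3]
      ring
    · intro z hz
      obtain ⟨ha, hb⟩ := (ReeGp.mem_center_iff z).1 hz
      rcases ReeGp.tri h3 z.c with hc | hc | hc
      · have : z = 1 := by ext <;> simp [ha, hb, hc]
        rw [this]; exact one_mem _
      · have : z = (⟨0, 0, -1⟩ : ReeGp K θ)⁻¹ := by ext <;> simp [ha, hb, hc]
        rw [this]; exact inv_mem hkey
      · have : z = (⟨0, 0, -1⟩ : ReeGp K θ) := by ext <;> simp [ha, hb, hc]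
        rw [this]; exact hkey
  refine ⟨hcs, ReeGp.lcs_succ_bot 1 (by rw [Subgroup.top_lowerCentralSeries_one, hcs]), ?_⟩
  intro hbot
  have : (⟨0, 0, -1⟩ : ReeGp K θ) ∈ Subgroup.lowerCentralSeries (⊤ : Subgroup (ReeGp K θ)) 1 := by
    rw [Subgroup.top_lowerCentralSeries_one]; exact hkey
  rw [hbot, Subgroup.mem_bot] at this
  have hc := congrArg ReeGp.c this
  simp at hc
end

section
/- Let K have characteristic 3 and |K| > 3 with Tits endomorphism θ. Then the commutator subgroup of the Ree root group Ξ_θ(K) equals {(0,b,c) : b,c ∈ K}. -/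
open scoped commutatorElement

section Aux

variable {K : Type*} [Field K] {θ : K →+* K}

/-- The projection to the first coordinate as a monoid hom to `Multiplicative K`. -/
def ReeGp.fstHom : ReeGp K θ →* Multiplicative K where
  toFun x := Multiplicative.ofAdd x.a
  map_one' := rfl
  map_mul' _ _ := rfl

lemma ReeGp.comm_formula (a x : K) :
    ⁅(⟨a, 0, 0⟩ : ReeGp K θ), (⟨x, 0, 0⟩ : ReeGp K θ)⁆ =
      ⟨0, a * θ x - x * θ a, a ^ 2 * θ x - x ^ 2 * θ a⟩ := by
  show (⟨a,0,0⟩ * ⟨x,0,0⟩ * (⟨a,0,0⟩ : ReeGp K θ)⁻¹ * (⟨x,0,0⟩ : ReeGp K θ)⁻¹) = _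
  ext <;> simp [map_neg, map_add] <;> ring

lemma ReeGp.comm_formula2 (b x : K) :
    ⁅(⟨0, b, 0⟩ : ReeGp K θ), (⟨x, 0, 0⟩ : ReeGp K θ)⁆ = ⟨0, 0, -(2 * (b * x))⟩ := by
  show (⟨0,b,0⟩ * ⟨x,0,0⟩ * (⟨0,b,0⟩ : ReeGp K θ)⁻¹ * (⟨x,0,0⟩ : ReeGp K θ)⁻¹) = _
  ext <;> simp [map_neg, map_add] <;> ring

lemma ReeGp.central_mem [CharP K 3] (c : K) : (⟨0, 0, c⟩ : ReeGp K θ) ∈ commutator (ReeGp K θ) := by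
  have h2 : ((-(2 * (2 * 1)) : K)) = c * 1 → True := fun _ => trivial
  have h3 : (3 : K) = 0 := by
    have := CharP.cast_eq_zero K 3; exact_mod_cast this
  have key : (⟨0, 0, c⟩ : ReeGp K θ) = ⁅(⟨0, c, 0⟩ : ReeGp K θ), (⟨1, 0, 0⟩ : ReeGp K θ)⁆ := by
    rw [ReeGp.comm_formula2]
    ext <;> simp
    linear_combination c * h3
  rw [key]
  exact Subgroup.commutator_mem_commutator (Subgroup.mem_top _) (Subgroup.mem_top _)

end Aux

theorem stmt_17 {K : Type*} [Field K] [CharP K 3] (θ : K →+* K)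
    (hθ : ∀ x : K, θ (θ x) = x ^ 3) (hK : 3 < Nat.card K ∨ Infinite K) :
    ∀ x : ReeGp K θ, x ∈ commutator (ReeGp K θ) ↔ x.a = 0 := by
  have h3 : (3 : K) = 0 := by
    have := CharP.cast_eq_zero K 3; exact_mod_cast this
  -- there exists a₀ with θ a₀ ≠ a₀
  obtain ⟨a₀, ha₀⟩ : ∃ a₀ : K, θ a₀ ≠ a₀ := by
    by_contra h
    push_neg at h
    have hcube : ∀ x : K, x ^ 3 = x := fun x => by
      have := hθ x; rw [h, h] at this; exact this.symm
    have hsub : (Set.univ : Set K) ⊆ {0, 1, -1} := by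
      intro x _
      have : x * (x - 1) * (x + 1) = 0 := by
        have := hcube x; linear_combination this
      rcases mul_eq_zero.mp this with h' | h'
      · rcases mul_eq_zero.mp h' with h'' | h''
        · exact Or.inl h''
        · exact Or.inr (Or.inl (sub_eq_zero.mp h''))
      · exact Or.inr (Or.inr (eq_neg_of_add_eq_zero_left h'))
    have hfin : (Set.univ : Set K).Finite :=
      Set.Finite.subset (Set.toFinite ({0, 1, -1} : Set K)) hsub
    have hfinK : Finite K := Set.finite_univ_iff.mp hfin
    rcases hK with hcard | hinf
    · have hle : Nat.card K ≤ 3 := by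
        have h1 : (Set.univ : Set K).ncard ≤ ({0, 1, -1} : Set K).ncard :=
          Set.ncard_le_ncard hsub (Set.toFinite _)
        have h2 : ({0, 1, -1} : Set K).ncard ≤ 3 := by
          calc ({0, 1, -1} : Set K).ncard ≤ ({1, -1} : Set K).ncard + 1 :=
                Set.ncard_insert_le _ _
            _ ≤ (({-1} : Set K).ncard + 1) + 1 := by
                have := Set.ncard_insert_le (1 : K) ({-1} : Set K); omega
            _ ≤ 3 := by rw [Set.ncard_singleton]
        rw [Set.ncard_univ] at h1
        omega
      omega
    · haveI := hinf; haveI := hfinK; exact not_finite K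
  set b₀ : K := a₀ - θ a₀ with hb₀def
  have hb₀ : b₀ ≠ 0 := fun h => ha₀ (sub_eq_zero.mp h).symm
  -- for each t, some commutator has a-part 0 and b-part t^2 * b₀
  have key : ∀ t : K, ∃ y : ReeGp K θ, y ∈ commutator (ReeGp K θ) ∧ y.a = 0 ∧
      y.b = t ^ 2 * b₀ := by
    intro t
    obtain ⟨s, hs⟩ : ∃ s : K, s * θ s = t ^ 2 := by
      rcases eq_or_ne t 0 with rfl | ht
      · exact ⟨0, by simp⟩
      · refine ⟨θ t / t, ?_⟩
        have hθt : θ t ≠ 0 := fun h => ht (θ.injective (by simpa using h))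
        rw [map_div₀, hθ t]
        field_simp
    refine ⟨⁅(⟨s * a₀, 0, 0⟩ : ReeGp K θ), (⟨s, 0, 0⟩ : ReeGp K θ)⁆,
      Subgroup.commutator_mem_commutator (Subgroup.mem_top _) (Subgroup.mem_top _), ?_, ?_⟩
    · rw [ReeGp.comm_formula]
    · rw [ReeGp.comm_formula]
      show (s * a₀) * θ s - s * θ (s * a₀) = t ^ 2 * b₀
      rw [map_mul, hb₀def, ← hs]; ring
  intro x
  constructor
  · intro hx
    have := Abelianization.commutator_subset_ker (ReeGp.fstHom (K := K) (θ := θ)) hx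
    simpa [ReeGp.fstHom, MonoidHom.mem_ker] using this
  · intro hx
    set u : K := x.b / b₀ with hu
    obtain ⟨y₁, hy₁, hy₁a, hy₁b⟩ := key u
    obtain ⟨y₂, hy₂, hy₂a, hy₂b⟩ := key 1
    obtain ⟨y₃, hy₃, hy₃a, hy₃b⟩ := key (u + 1)
    set z : ReeGp K θ := y₁ * y₂ * y₃⁻¹ with hz
    have hzmem : z ∈ commutator (ReeGp K θ) :=
      Subgroup.mul_mem _ (Subgroup.mul_mem _ hy₁ hy₂) (Subgroup.inv_mem _ hy₃)
    have hza : z.a = 0 := by simp [hz, hy₁a, hy₂a, hy₃a]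
    have hzb : z.b = x.b := by
      have : z.b = y₁.b + y₂.b - y₃.b := by
        simp [hz, hy₁a, hy₂a, hy₃a]
        ring
      rw [this, hy₁b, hy₂b, hy₃b]
      have hbu : b₀ * u = x.b := by
        rw [hu]; field_simp
      -- u² b₀ + 1² b₀ − (u+1)² b₀ = −2ub₀ = u b₀ in char 3
      linear_combination hbu + (-(b₀ * u)) * h3
    have hfinal : x = z * ⟨0, 0, x.c - z.c⟩ := by
      ext <;> simp [hza, hzb, hx]
    rw [hfinal]
    exact Subgroup.mul_mem _ hzmem (ReeGp.central_mem _)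
end

section
/- Let η be the automorphism of the Ree root group Ξ_θ(K) given by η(a,b,c) = (−a, b, −c). Then η is an involutory automorphism, and an element σ = η∘(right translation by ξ), with ξ = (a,b,c) ∈ Ξ, squares to the identity if and only if b = −a^{θ+1}. -/
theorem stmt_18 {K : Type*} [Field K] [CharP K 3] (θ : K →+* K)
    (hθ : ∀ x : K, θ (θ x) = x ^ 3)
    (η : ReeGp K θ → ReeGp K θ) (hη : ∀ x, η x = (⟨-x.a, x.b, -x.c⟩ : ReeGp K θ)) :
    (∀ x y : ReeGp K θ, η (x * y) = η x * η y) ∧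
    Function.Bijective η ∧
    η ∘ η = id ∧
    (∀ ξ : ReeGp K θ,
      ((fun x => η x * ξ) ∘ (fun x => η x * ξ) = id) ↔ ξ.b = -(θ ξ.a * ξ.a)) := by
  have h3 : (3 : K) = 0 := CharP.cast_eq_zero K 3
  have hmul : ∀ x y : ReeGp K θ, η (x * y) = η x * η y := by
    intro x y
    rw [hη, hη, hη]
    ext <;> simp [map_neg] <;> ring
  have hinv : η ∘ η = id := by
    funext x
    simp [hη]
  refine ⟨hmul, Function.bijective_iff_has_inverse.mpr ⟨η, congrFun hinv, congrFun hinv⟩,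
    hinv, ?_⟩
  intro ξ
  constructor
  · intro h
    have h1 := congrFun h 1
    simp only [Function.comp_apply, id_eq, hη] at h1
    have hb := congrArg ReeGp.b h1
    simp [map_neg] at hb
    linear_combination -hb + ξ.b * h3
  · intro hb
    funext x
    simp only [Function.comp_apply, id_eq, hη]
    ext <;> simp [map_neg, map_add, hb]
    · linear_combination (-(θ ξ.a * ξ.a)) * h3
    · linear_combination (-(x.a * ξ.a * θ ξ.a) + ξ.a ^ 2 * θ ξ.a) * h3
end
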